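/- Let R be a two-sided noetherian ring such that every acyclic complex of injective left R-modules is totally acyclic. Then for every Gorenstein injective left R-module G, the character module G⁺ = Hom_ℤ(G, ℚ/ℤ) is a Gorenstein flat right R-module. -/

import Mathlib

open CategoryTheory

universe u

namespace TotallyAcyclicPaper

/-- An unbounded chain complex of left `R`-modules. -/
abbrev Cx (R : Type u) [Ring R] := ChainComplex (ModuleCat.{u} R) ℤ

/-- A complex is acyclic (exact) if it is exact at every degree. -/
def Acyclic (R : Type u) [Ring R] (C : Cx R) : Prop :=
  ∀ (n : ℤ) (x : C.X n), C.d n (n - 1) x = 0 → ∃ y : C.X (n + 1), C.d (n + 1) n y = x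

/-- The `n`-th cycle submodule `Z_n(C) = ker (d_n : C_n → C_{n-1})`. -/
def cycles (R : Type u) [Ring R] (C : Cx R) (n : ℤ) : Submodule R (C.X n) :=
  LinearMap.ker (C.d n (n - 1)).hom

/-- An acyclic complex of injective modules is totally acyclic if `Hom(E,-)` leaves it
exact for every injective module `E`. -/
def TotallyAcyclicInj (R : Type u) [Ring R] (C : Cx R) : Prop :=
  Acyclic R C ∧ (∀ n : ℤ, Module.Injective R (C.X n)) ∧
    ∀ (E : Type u) [AddCommGroup E] [Module R E], Module.Injective R E →
      ∀ (n : ℤ) (f : E →ₗ[R] C.X n), (∀ x : E, C.d n (n - 1) (f x) = 0) →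
        ∃ g : E →ₗ[R] C.X (n + 1), ∀ x : E, C.d (n + 1) n (g x) = f x

/-- A module is Gorenstein injective if it is a cycle of a totally acyclic complex of
injective modules. -/
def IsGorensteinInj (R : Type u) [Ring R] (M : Type u) [AddCommGroup M] [Module R M] :
    Prop :=
  ∃ C : Cx R, TotallyAcyclicInj R C ∧ ∃ n : ℤ, Nonempty (M ≃ₗ[R] cycles R C n)

/-- The subgroup of `M ⊗_ℤ N` by which one divides to obtain `M ⊗_R N`, for a right
`R`-module `M` and a left `R`-module `N`. -/
def trel (R : Type u) [Ring R] (M : Type u) [AddCommGroup M] [Module Rᵐᵒᵖ M]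
    (N : Type u) [AddCommGroup N] [Module R N] : Submodule ℤ (TensorProduct ℤ M N) :=
  Submodule.span ℤ {x | ∃ (m : M) (r : R) (n : N),
    x = (MulOpposite.op r • m) ⊗ₜ[ℤ] n - m ⊗ₜ[ℤ] (r • n)}

/-- The tensor product `M ⊗_R N` of a right `R`-module `M` and a left `R`-module `N`
over a (not necessarily commutative) ring `R`. -/
abbrev NCTensor (R : Type u) [Ring R] (M : Type u) [AddCommGroup M] [Module Rᵐᵒᵖ M]
    (N : Type u) [AddCommGroup N] [Module R N] : Type u :=
  TensorProduct ℤ M N ⧸ trel R M N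

/-- Functoriality of `M ⊗_R -` in the second variable. -/
noncomputable def ncMapRight (R : Type u) [Ring R]
    (M : Type u) [AddCommGroup M] [Module Rᵐᵒᵖ M]
    {N N' : Type u} [AddCommGroup N] [Module R N] [AddCommGroup N'] [Module R N']
    (f : N →ₗ[R] N') : NCTensor R M N →ₗ[ℤ] NCTensor R M N' := by
  refine Submodule.mapQ _ _ (LinearMap.lTensor M f.toAddMonoidHom.toIntLinearMap) ?_
  refine Submodule.span_le.2 ?_
  rintro x ⟨m, r, n, rfl⟩
  show LinearMap.lTensor M f.toAddMonoidHom.toIntLinearMap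
      ((MulOpposite.op r • m) ⊗ₜ[ℤ] n - m ⊗ₜ[ℤ] (r • n)) ∈ trel R M N'
  refine Submodule.subset_span ⟨m, r, f n, ?_⟩
  simp

/-- Functoriality of `- ⊗_R N` in the first variable. -/
noncomputable def ncMapLeft (R : Type u) [Ring R]
    (N : Type u) [AddCommGroup N] [Module R N]
    {M M' : Type u} [AddCommGroup M] [Module Rᵐᵒᵖ M] [AddCommGroup M'] [Module Rᵐᵒᵖ M']
    (f : M →ₗ[Rᵐᵒᵖ] M') : NCTensor R M N →ₗ[ℤ] NCTensor R M' N := by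
  refine Submodule.mapQ _ _ (LinearMap.rTensor N f.toAddMonoidHom.toIntLinearMap) ?_
  refine Submodule.span_le.2 ?_
  rintro x ⟨m, r, n, rfl⟩
  show LinearMap.rTensor N f.toAddMonoidHom.toIntLinearMap
      ((MulOpposite.op r • m) ⊗ₜ[ℤ] n - m ⊗ₜ[ℤ] (r • n)) ∈ trel R M' N
  refine Submodule.subset_span ⟨f m, r, n, ?_⟩
  simp

/-- A left `R`-module `N` is flat if tensoring with it preserves injectivity of maps of
right `R`-modules. -/
def FlatLeft (R : Type u) [Ring R] (N : Type u) [AddCommGroup N] [Module R N] : Prop :=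
  ∀ (A B : Type u) [AddCommGroup A] [Module Rᵐᵒᵖ A] [AddCommGroup B] [Module Rᵐᵒᵖ B]
    (f : A →ₗ[Rᵐᵒᵖ] B), Function.Injective f → Function.Injective (ncMapLeft R N f)

/-- A right `R`-module `M` is flat if tensoring with it preserves injectivity of maps of
left `R`-modules. -/
def FlatRight (R : Type u) [Ring R] (M : Type u) [AddCommGroup M] [Module Rᵐᵒᵖ M] : Prop :=
  ∀ (A B : Type u) [AddCommGroup A] [Module R A] [AddCommGroup B] [Module R B]
    (f : A →ₗ[R] B), Function.Injective f → Function.Injective (ncMapRight R M f)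

/-- An acyclic complex `C` of flat right `R`-modules is F-totally acyclic if `C ⊗_R I`
is acyclic for every injective left `R`-module `I`. -/
def FTotallyAcyclicRight (R : Type u) [Ring R] (C : Cx Rᵐᵒᵖ) : Prop :=
  Acyclic Rᵐᵒᵖ C ∧ (∀ n : ℤ, FlatRight R (C.X n)) ∧
    ∀ (I : Type u) [AddCommGroup I] [Module R I], Module.Injective R I →
      ∀ (n : ℤ) (x : NCTensor R (C.X n) I),
        ncMapLeft R I ((C.d n (n - 1)).hom : C.X n →ₗ[Rᵐᵒᵖ] C.X (n - 1)) x = 0 →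
          ∃ y : NCTensor R (C.X (n + 1)) I,
            ncMapLeft R I ((C.d (n + 1) n).hom : C.X (n + 1) →ₗ[Rᵐᵒᵖ] C.X n) y = x

/-- A right `R`-module is Gorenstein flat if it is a cycle of an F-totally acyclic
complex of flat right modules. -/
def IsGorensteinFlatRight (R : Type u) [Ring R] (M : Type u)
    [AddCommGroup M] [Module Rᵐᵒᵖ M] : Prop :=
  ∃ C : Cx Rᵐᵒᵖ, FTotallyAcyclicRight R C ∧ ∃ n : ℤ, Nonempty (M ≃ₗ[Rᵐᵒᵖ] cycles Rᵐᵒᵖ C n)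

/-- The character module `M⁺ = Hom_ℤ(M, ℚ/ℤ)` of a module `M`. -/
def CharMod (M : Type u) [AddCommGroup M] : Type u := M →+ AddCircle (1 : ℚ)

instance (M : Type u) [AddCommGroup M] : AddCommGroup (CharMod M) :=
  inferInstanceAs (AddCommGroup (M →+ AddCircle (1 : ℚ)))

/-- The right `R`-module structure on the character module of a left `R`-module, given by
`(f · r) (m) = f (r · m)`. -/
instance (R : Type u) [Ring R] (M : Type u) [AddCommGroup M] [Module R M] :
    Module Rᵐᵒᵖ (CharMod M) where
  smul r f := (f : M →+ AddCircle (1 : ℚ)).comp (DistribMulAction.toAddMonoidHom M r.unop)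
  one_smul f := by
    show (f : M →+ AddCircle (1 : ℚ)).comp _ = f
    ext x
    show (show M →+ AddCircle (1 : ℚ) from f) ((1 : Rᵐᵒᵖ).unop • x) = (show M →+ AddCircle (1 : ℚ) from f) x
    rw [MulOpposite.unop_one, one_smul]
  mul_smul r s f := by
    show (f : M →+ AddCircle (1 : ℚ)).comp _ = ((f : M →+ _).comp _).comp _
    ext x
    show (show M →+ AddCircle (1 : ℚ) from f) ((r * s).unop • x) =
      (show M →+ AddCircle (1 : ℚ) from f) (s.unop • r.unop • x)
    rw [MulOpposite.unop_mul, mul_smul]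
  smul_zero r := by
    show (0 : M →+ AddCircle (1 : ℚ)).comp _ = 0
    ext x; simp
  smul_add r f g := by
    show ((f + g : M →+ AddCircle (1 : ℚ))).comp _ = (f : M →+ _).comp _ + (g : M →+ _).comp _
    ext x; rfl
  add_smul r s f := by
    show (f : M →+ AddCircle (1 : ℚ)).comp _ = (f : M →+ _).comp _ + (f : M →+ _).comp _
    ext x
    show (show M →+ AddCircle (1 : ℚ) from f) ((r + s).unop • x) =
      (show M →+ AddCircle (1 : ℚ) from f) (r.unop • x) + (show M →+ AddCircle (1 : ℚ) from f) (s.unop • x)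
    rw [MulOpposite.unop_add, add_smul, map_add]
  zero_smul f := by
    show (f : M →+ AddCircle (1 : ℚ)).comp _ = 0
    ext x
    show (show M →+ AddCircle (1 : ℚ) from f) ((0 : Rᵐᵒᵖ).unop • x) = 0
    rw [MulOpposite.unop_zero, zero_smul, map_zero]

noncomputable section Aux

open MulOpposite

local notation "QQ" => AddCircle (1 : ℚ)

lemma char_extend {A B : Type u} [AddCommGroup A] [AddCommGroup B]
    (i : A →+ B) (hi : Function.Injective i) (χ : A →+ QQ) :
    ∃ ξ : B →+ QQ, ∀ a, ξ (i a) = χ a := by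
  obtain ⟨ξ, hξ⟩ := (Module.Baer.of_divisible _).extension_property_addMonoidHom i hi χ
  exact ⟨ξ, fun a => DFunLike.congr_fun hξ a⟩

lemma char_sep {A : Type u} [AddCommGroup A] {a : A} (h : a ≠ 0) :
    ∃ χ : A →+ QQ, χ a ≠ 0 := by
  obtain ⟨c, hc⟩ := CharacterModule.exists_character_apply_ne_zero_of_ne_zero h
  exact ⟨c, hc⟩

lemma char_factor {B C : Type u} [AddCommGroup B] [AddCommGroup C]
    (g : B →+ C) (χ : B →+ QQ) (h : ∀ b, g b = 0 → χ b = 0) :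
    ∃ ξ : C →+ QQ, ∀ b, ξ (g b) = χ b := by
  have hK : ∀ b ∈ g.ker, χ b = 0 := fun b hb => h b hb
  let l : B ⧸ g.ker →+ QQ := QuotientAddGroup.lift g.ker χ hK
  let e : B ⧸ g.ker ≃+ g.range := QuotientAddGroup.quotientKerEquivRange g
  obtain ⟨ξ, hξ⟩ := char_extend g.range.subtype Subtype.coe_injective
    (l.comp e.symm.toAddMonoidHom)
  refine ⟨ξ, fun b => ?_⟩
  have h1 : ξ (g b) = l (e.symm ⟨g b, AddMonoidHom.mem_range.2 ⟨b, rfl⟩⟩) :=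
    hξ ⟨g b, AddMonoidHom.mem_range.2 ⟨b, rfl⟩⟩
  have h2 : e.symm ⟨g b, AddMonoidHom.mem_range.2 ⟨b, rfl⟩⟩ = QuotientAddGroup.mk b := by
    apply e.injective
    rw [AddEquiv.apply_symm_apply]
    rfl
  rw [h1, h2]
  rfl

lemma char_exact {A B C : Type u} [AddCommGroup A] [AddCommGroup B] [AddCommGroup C]
    (f : A →+ B) (g : B →+ C) (hex : ∀ b, g b = 0 → ∃ a, f a = b)
    (χ : B →+ QQ) (hχ : ∀ a, χ (f a) = 0) : ∃ ξ : C →+ QQ, ∀ b, ξ (g b) = χ b :=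
  char_factor g χ (fun b hb => by obtain ⟨a, rfl⟩ := hex b hb; exact hχ a)

end Aux

noncomputable section Aux2

open MulOpposite

local notation "QQ" => AddCircle (1 : ℚ)

variable {R : Type u} [Ring R]

instance (M : Type u) [AddCommGroup M] : FunLike (CharMod M) M (AddCircle (1 : ℚ)) :=
  inferInstanceAs (FunLike (M →+ AddCircle (1 : ℚ)) M _)

instance (M : Type u) [AddCommGroup M] :
    AddMonoidHomClass (CharMod M) M (AddCircle (1 : ℚ)) :=
  inferInstanceAs (AddMonoidHomClass (M →+ AddCircle (1 : ℚ)) M _)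

/-- View a character as an `AddMonoidHom`. -/
def CharMod.toAdd {M : Type u} [AddCommGroup M] (χ : CharMod M) : M →+ AddCircle (1 : ℚ) := χ

@[simp] lemma CharMod.toAdd_apply {M : Type u} [AddCommGroup M] (χ : CharMod M) (m : M) :
    χ.toAdd m = χ m := rfl

/-- Left `R`-module structure on the character module of a right `R`-module. -/
instance instCharModLeft (M : Type u) [AddCommGroup M] [Module Rᵐᵒᵖ M] :
    Module R (CharMod M) where
  smul r f := (f : M →+ QQ).comp (DistribMulAction.toAddMonoidHom M (op r))
  one_smul f := by
    show (f : M →+ QQ).comp _ = f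
    ext x
    show (show M →+ QQ from f) (op (1 : R) • x) = (show M →+ QQ from f) x
    rw [op_one, one_smul]
  mul_smul r s f := by
    show (f : M →+ QQ).comp _ = ((f : M →+ QQ).comp _).comp _
    ext x
    show (show M →+ QQ from f) (op (r * s) • x) = (show M →+ QQ from f) (op s • op r • x)
    rw [MulOpposite.op_mul, mul_smul]
  smul_zero r := by
    show (0 : M →+ QQ).comp _ = 0
    ext x; simp
  smul_add r f g := by
    show ((f + g : M →+ QQ)).comp _ = (f : M →+ QQ).comp _ + (g : M →+ QQ).comp _
    ext x; rfl
  add_smul r s f := by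
    show (f : M →+ QQ).comp _ = (f : M →+ QQ).comp _ + (f : M →+ QQ).comp _
    ext x
    show (show M →+ QQ from f) (op (r + s) • x) =
      (show M →+ QQ from f) (op r • x) + (show M →+ QQ from f) (op s • x)
    rw [MulOpposite.op_add, add_smul, map_add]
  zero_smul f := by
    show (f : M →+ QQ).comp _ = 0
    ext x
    show (show M →+ QQ from f) (op (0 : R) • x) = 0
    rw [MulOpposite.op_zero, zero_smul, map_zero]

@[ext] lemma CharMod.ext {M : Type u} [AddCommGroup M] {χ ξ : CharMod M}
    (h : ∀ m, χ m = ξ m) : χ = ξ := DFunLike.ext _ _ h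

lemma smul_charR_apply {M : Type u} [AddCommGroup M] [Module R M]
    (r : Rᵐᵒᵖ) (χ : CharMod M) (m : M) :
    (r • χ) m = χ (r.unop • m) := rfl

lemma smul_charL_apply {M : Type u} [AddCommGroup M] [Module Rᵐᵒᵖ M]
    (r : R) (χ : CharMod M) (m : M) :
    (r • χ) m = χ (op r • m) := rfl

/-- Dual of a map of left modules. -/
def charDual {M N : Type u} [AddCommGroup M] [Module R M] [AddCommGroup N] [Module R N]
    (f : M →ₗ[R] N) : CharMod N →ₗ[Rᵐᵒᵖ] CharMod M where
  toFun χ := (χ.toAdd.comp f.toAddMonoidHom : CharMod M)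
  map_add' χ ξ := by apply CharMod.ext; intro m; rfl
  map_smul' r χ := by
    apply CharMod.ext; intro m
    show χ (r.unop • f m) = χ (f (r.unop • m))
    rw [f.map_smul]

@[simp] lemma charDual_apply {M N : Type u} [AddCommGroup M] [Module R M] [AddCommGroup N]
    [Module R N] (f : M →ₗ[R] N) (χ : CharMod N) (m : M) :
    (charDual f χ) m = χ (f m) := rfl

/-- Dual of a map of right modules. -/
def charDualOp {M N : Type u} [AddCommGroup M] [Module Rᵐᵒᵖ M] [AddCommGroup N]
    [Module Rᵐᵒᵖ N] (f : M →ₗ[Rᵐᵒᵖ] N) : CharMod N →ₗ[R] CharMod M where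
  toFun χ := (χ.toAdd.comp f.toAddMonoidHom : CharMod M)
  map_add' χ ξ := by apply CharMod.ext; intro m; rfl
  map_smul' r χ := by
    apply CharMod.ext; intro m
    show χ (op r • f m) = χ (f (op r • m))
    rw [f.map_smul]

@[simp] lemma charDualOp_apply {M N : Type u} [AddCommGroup M] [Module Rᵐᵒᵖ M] [AddCommGroup N]
    [Module Rᵐᵒᵖ N] (f : M →ₗ[Rᵐᵒᵖ] N) (χ : CharMod N) (m : M) :
    (charDualOp f χ) m = χ (f m) := rfl

end Aux2

noncomputable section Aux3

open MulOpposite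

local notation "QQ" => AddCircle (1 : ℚ)

variable {R : Type u} [Ring R]

lemma d_zero_iff (C : Cx R) (i : ℤ) (j j' : ℤ) (h : j = j') (x : C.X i) :
    C.d i j x = 0 ↔ C.d i j' x = 0 := by subst h; rfl

lemma acyclic_gen {C : Cx R} (hC : Acyclic R C) {a b c : ℤ} (h1 : a = b + 1) (h2 : b = c + 1)
    (x : C.X b) (hx : C.d b c x = 0) : ∃ y : C.X a, C.d a b y = x := by
  subst h2; subst h1
  exact hC (c + 1) x ((d_zero_iff C (c+1) (c+1-1) c (by omega) x).2 hx)

lemma tot_gen {C : Cx R} (hC : TotallyAcyclicInj R C) {a b c : ℤ} (h1 : a = b + 1)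
    (h2 : b = c + 1) (E : Type u) [AddCommGroup E] [Module R E] (hE : Module.Injective R E)
    (f : E →ₗ[R] C.X b) (hf : ∀ x, C.d b c (f x) = 0) :
    ∃ g : E →ₗ[R] C.X a, ∀ x, C.d a b (g x) = f x := by
  subst h2; subst h1
  exact hC.2.2 E hE (c + 1) f
    (fun x => (d_zero_iff C (c+1) (c+1-1) c (by omega) (f x)).2 (hf x))

lemma charDual_zero {M N : Type u} [AddCommGroup M] [Module R M] [AddCommGroup N]
    [Module R N] : charDual (0 : M →ₗ[R] N) = 0 := by
  apply LinearMap.ext; intro χ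
  apply CharMod.ext; intro m
  show χ 0 = (0 : M →+ QQ) m
  simp

lemma charDualOp_zero {M N : Type u} [AddCommGroup M] [Module Rᵐᵒᵖ M] [AddCommGroup N]
    [Module Rᵐᵒᵖ N] : charDualOp (0 : M →ₗ[Rᵐᵒᵖ] N) = (0 : CharMod N →ₗ[R] CharMod M) := by
  apply LinearMap.ext; intro χ
  apply CharMod.ext; intro m
  show χ 0 = (0 : M →+ QQ) m
  simp

lemma d_apply_d {C : Cx R} (a b c : ℤ) (m : C.X a) : C.d b c (C.d a b m) = 0 := by
  have h2 := congrArg (fun φ => φ.hom m) (C.d_comp_d a b c)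
  exact h2

lemma charDual_d_d (C : Cx R) (a b c : ℤ) (χ : CharMod (C.X c)) :
    charDual (C.d a b).hom (charDual (C.d b c).hom χ) = 0 := by
  apply CharMod.ext; intro m
  show χ (C.d b c (C.d a b m)) = (0 : C.X a →+ QQ) m
  rw [d_apply_d]
  simp

lemma ddual_d_d (C : Cx R) (a b c : ℤ) (ψ : CharMod (CharMod (C.X a))) :
    charDualOp (charDual (C.d b c).hom) (charDualOp (charDual (C.d a b).hom) ψ) = 0 := by
  apply CharMod.ext; intro χ
  show ψ (charDual (C.d a b).hom (charDual (C.d b c).hom χ)) = (0 : CharMod (C.X c) →+ QQ) χ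
  rw [charDual_d_d]
  simp

/-- The reversed character complex of a complex of left modules. -/
def dualCx (C : Cx R) : Cx Rᵐᵒᵖ where
  X n := ModuleCat.of Rᵐᵒᵖ (CharMod (C.X (-n)))
  d i j := ModuleCat.ofHom (charDual (C.d (-j) (-i)).hom)
  shape i j h := by
    have h0 : C.d (-j) (-i) = 0 := by
      apply C.shape
      simp only [ComplexShape.down_Rel] at h ⊢
      omega
    show ModuleCat.ofHom (charDual (C.d (-j) (-i)).hom) = 0
    rw [h0, ModuleCat.hom_zero, charDual_zero]
    rfl
  d_comp_d' i j k _ _ := by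
    apply ModuleCat.hom_ext; apply LinearMap.ext; intro χ
    exact charDual_d_d C (-k) (-j) (-i) χ

/-- The double character complex of a complex of left modules. -/
def ddualCx (C : Cx R) : Cx R where
  X n := ModuleCat.of R (CharMod (CharMod (C.X n)))
  d i j := ModuleCat.ofHom (charDualOp (charDual (C.d i j).hom))
  shape i j h := by
    have h0 : C.d i j = 0 := C.shape i j h
    show ModuleCat.ofHom (charDualOp (charDual (C.d i j).hom)) = 0
    rw [h0, ModuleCat.hom_zero, charDual_zero, charDualOp_zero]
    rfl
  d_comp_d' i j k _ _ := by
    apply ModuleCat.hom_ext; apply LinearMap.ext; intro ψ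
    exact ddual_d_d C i j k ψ

end Aux3

noncomputable section Aux4

open MulOpposite

local notation "QQ" => AddCircle (1 : ℚ)

variable {R : Type u} [Ring R]
variable {M : Type u} [AddCommGroup M] [Module Rᵐᵒᵖ M]
variable {N : Type u} [AddCommGroup N] [Module R N]

/-- Class of a simple tensor in the noncommutative tensor product. -/
def tmk (m : M) (n : N) : NCTensor R M N := Submodule.Quotient.mk (m ⊗ₜ[ℤ] n)

lemma tmk_add_left (m m' : M) (n : N) :
    (tmk (m + m') n : NCTensor R M N) = tmk m n + tmk m' n := by
  show Submodule.Quotient.mk _ = _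
  rw [TensorProduct.add_tmul]
  rfl

lemma tmk_add_right (m : M) (n n' : N) :
    (tmk m (n + n') : NCTensor R M N) = tmk m n + tmk m n' := by
  show Submodule.Quotient.mk _ = _
  rw [TensorProduct.tmul_add]
  rfl

lemma tmk_zero_left (n : N) : (tmk (0 : M) n : NCTensor R M N) = 0 := by
  show Submodule.Quotient.mk _ = _
  rw [TensorProduct.zero_tmul]
  rfl

lemma tmk_zero_right (m : M) : (tmk m (0 : N) : NCTensor R M N) = 0 := by
  show Submodule.Quotient.mk _ = _
  rw [TensorProduct.tmul_zero]
  rfl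

lemma tmk_balance (m : M) (r : R) (n : N) :
    (tmk (op r • m) n : NCTensor R M N) = tmk m (r • n) := by
  show Submodule.Quotient.mk _ = Submodule.Quotient.mk _
  rw [Submodule.Quotient.eq]
  exact Submodule.subset_span ⟨m, r, n, rfl⟩

/-- Two characters on a noncommutative tensor product agreeing on simple tensors agree. -/
lemma nct_hom_ext {χ ξ : NCTensor R M N →+ QQ}
    (h : ∀ (m : M) (n : N), χ (tmk m n) = ξ (tmk m n)) : χ = ξ := by
  apply AddMonoidHom.ext
  intro x
  obtain ⟨t, rfl⟩ := Submodule.Quotient.mk_surjective _ x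
  induction t using TensorProduct.induction_on with
  | zero => simp [show ((Submodule.Quotient.mk 0 : NCTensor R M N)) = 0 from rfl]
  | tmul m n => exact h m n
  | add s t hs ht =>
    have : (Submodule.Quotient.mk (s + t) : NCTensor R M N) =
        Submodule.Quotient.mk s + Submodule.Quotient.mk t := rfl
    rw [this, map_add, map_add, hs, ht]

/-- A character on `M ⊗_R N` gives an `R`-linear map `N → M⁺`. -/
def curryNC (χ : NCTensor R M N →+ QQ) : N →ₗ[R] CharMod M where
  toFun n :=
    { toFun := fun m => χ (tmk m n)
      map_zero' := by show χ (tmk (0 : M) n) = 0; rw [tmk_zero_left, map_zero]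
      map_add' := fun m m' => by
        show χ (tmk (m + m') n) = χ (tmk m n) + χ (tmk m' n)
        rw [tmk_add_left, map_add] }
  map_add' n n' := by
    apply CharMod.ext; intro m
    show χ (tmk m (n + n')) = χ (tmk m n) + χ (tmk m n')
    rw [tmk_add_right, map_add]
  map_smul' r n := by
    apply CharMod.ext; intro m
    show χ (tmk m (r • n)) = χ (tmk (op r • m) n)
    rw [tmk_balance]

@[simp] lemma curryNC_apply (χ : NCTensor R M N →+ QQ) (n : N) (m : M) :
    curryNC χ n m = χ (tmk m n) := rfl

/-- An `R`-linear map `N → M⁺` gives a character on `M ⊗_R N`. -/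
def uncurryNC (g : N →ₗ[R] CharMod M) : NCTensor R M N →+ QQ := by
  refine (Submodule.liftQ (trel R M N) (TensorProduct.lift (LinearMap.mk₂' ℤ ℤ
    (fun m n => g n m) ?_ ?_ ?_ ?_)) ?_).toAddMonoidHom
  · intro m m' n; exact map_add (g n) m m'
  · intro z m n; exact map_zsmul (g n) z m
  · intro m n n'
    show g (n + n') m = g n m + g n' m
    rw [map_add g]; rfl
  · intro z m n
    show g (z • n) m = z • g n m
    rw [map_zsmul g]; rfl
  · refine Submodule.span_le.2 ?_
    rintro x ⟨m, r, n, rfl⟩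
    simp only [SetLike.mem_coe, LinearMap.mem_ker, map_sub, TensorProduct.lift.tmul,
      LinearMap.mk₂'_apply]
    show TensorProduct.lift _ ((op r • m) ⊗ₜ[ℤ] n - m ⊗ₜ[ℤ] (r • n)) = 0
    rw [map_sub]
    show g n (op r • m) - g (r • n) m = 0
    rw [map_smul g]
    show g n (op r • m) - (r • g n) m = 0
    rw [smul_charL_apply, sub_self]

@[simp] lemma uncurryNC_apply (g : N →ₗ[R] CharMod M) (m : M) (n : N) :
    uncurryNC g (tmk m n) = g n m := rfl

lemma ncMapRight_tmk {N' : Type u} [AddCommGroup N'] [Module R N'] (f : N →ₗ[R] N')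
    (m : M) (n : N) : ncMapRight R M f (tmk m n) = tmk m (f n) := by
  show Submodule.mapQ _ _ _ _ (Submodule.Quotient.mk _) = _
  rfl

lemma ncMapLeft_tmk {M' : Type u} [AddCommGroup M'] [Module Rᵐᵒᵖ M'] (f : M →ₗ[Rᵐᵒᵖ] M')
    (m : M) (n : N) : ncMapLeft R N f (tmk m n) = tmk (f m) n := by
  show Submodule.mapQ _ _ _ _ (Submodule.Quotient.mk _) = _
  rfl

end Aux4

noncomputable section Aux5

open MulOpposite

local notation "QQ" => AddCircle (1 : ℚ)

variable {R : Type u} [Ring R]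

/-- `c ↦ ∑ i, c i • e i` as a linear map. -/
def combLin {E : Type u} [AddCommGroup E] [Module R E] {k : ℕ} (e : Fin k → E) :
    (Fin k → R) →ₗ[R] E where
  toFun c := ∑ i, c i • e i
  map_add' c c' := by simp [add_smul, Finset.sum_add_distrib]
  map_smul' r c := by simp [mul_smul, Finset.smul_sum]

@[simp] lemma combLin_apply {E : Type u} [AddCommGroup E] [Module R E] {k : ℕ}
    (e : Fin k → E) (c : Fin k → R) : combLin e c = ∑ i, c i • e i := rfl

lemma charSum_apply {A : Type u} [AddCommGroup A] {k : ℕ} (f : Fin k → CharMod A) (x : A) :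
    (∑ i, f i) x = ∑ i, f i x := by
  let ev : CharMod A →+ QQ :=
    { toFun := fun χ => χ x, map_zero' := rfl, map_add' := fun _ _ => rfl }
  exact map_sum ev f Finset.univ

lemma ddual_injective [IsNoetherianRing R] {E : Type u} [AddCommGroup E] [Module R E]
    (hE : Module.Injective R E) : Module.Injective R (CharMod (CharMod E)) := by
  apply Module.Baer.injective
  intro I φ
  obtain ⟨k, a, ha⟩ := Submodule.fg_iff_exists_fin_generating_family.1 (IsNoetherian.noetherian I)
  set π : (Fin k → R) →ₗ[R] R := combLin a with hπdef
  have haI : ∀ i, a i ∈ I := fun i => by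
    rw [← ha]; exact Submodule.subset_span ⟨i, rfl⟩
  have hπI : ∀ c, π c ∈ I := by
    intro c
    rw [hπdef, combLin_apply]
    exact Submodule.sum_mem I (fun i _ => Submodule.smul_mem I _ (haI i))
  have hπsurj : ∀ x ∈ I, ∃ c, π c = x := by
    intro x hx
    rw [← ha] at hx
    exact (Submodule.mem_span_range_iff_exists_fun R).1 hx
  obtain ⟨l, nb, hnb⟩ := Submodule.fg_iff_exists_fin_generating_family.1
    (IsNoetherian.noetherian (LinearMap.ker π))
  have hnbker : ∀ j, π (nb j) = 0 := fun j => by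
    have : nb j ∈ LinearMap.ker π := by rw [← hnb]; exact Submodule.subset_span ⟨j, rfl⟩
    exact this
  set ψv : Fin k → CharMod (CharMod E) := fun i => φ ⟨a i, haI i⟩ with hψv
  have h5 : ∀ j, ∑ i, nb j i • ψv i = 0 := by
    intro j
    have hz : (∑ i, nb j i • (⟨a i, haI i⟩ : I)) = 0 := by
      apply Subtype.ext
      have hc : ((∑ i, nb j i • (⟨a i, haI i⟩ : I) : I) : R) = π (nb j) := by
        rw [hπdef, combLin_apply]
        simp
      rw [hc, hnbker j]; rfl
    calc ∑ i, nb j i • ψv i = ∑ i, φ (nb j i • (⟨a i, haI i⟩ : I)) := by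
          refine Finset.sum_congr rfl fun i _ => ?_
          rw [map_smul φ]
      _ = φ (∑ i, nb j i • (⟨a i, haI i⟩ : I)) := (map_sum φ _ _).symm
      _ = 0 := by rw [hz, map_zero]
  -- the subgroup of relations
  set W : AddSubgroup (Fin k → CharMod E) :=
    AddSubgroup.closure {w | ∃ (j : Fin l) (ξ : CharMod E), w = fun i => op (nb j i) • ξ}
    with hWdef
  set β : (Fin k → CharMod E) →+ CharMod E :=
    { toFun := fun v => ∑ i, op (a i) • v i
      map_zero' := by simp
      map_add' := fun v w => by simp [smul_add, Finset.sum_add_distrib] } with hβdef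
  -- key claim: ker β ⊆ W
  have key : ∀ v : Fin k → CharMod E, β v = 0 → v ∈ W := by
    intro v hv
    set χ' : (Fin k → E) →+ QQ :=
      { toFun := fun e => ∑ i, v i (e i)
        map_zero' := by simp
        map_add' := fun e e' => by simp [Finset.sum_add_distrib] } with hχ'def
    set ν : (Fin k → E) →+ (Fin l → E) :=
      { toFun := fun e => fun j => ∑ i, nb j i • e i
        map_zero' := by funext j; simp
        map_add' := fun e e' => by funext j; simp [smul_add, Finset.sum_add_distrib] }
        with hνdef
    have hfac : ∀ e, ν e = 0 → χ' e = 0 := by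
      intro e he
      have hgen : ∀ j, ∑ i, nb j i • e i = 0 := fun j => congr_fun he j
      set q : (Fin k → R) →ₗ[R] E := combLin e with hqdef
      have hNq : LinearMap.ker π ≤ LinearMap.ker q := by
        rw [← hnb, Submodule.span_le]
        rintro c ⟨j, rfl⟩
        show q (nb j) = 0
        simpa [hqdef] using hgen j
      set π' : (Fin k → R) →ₗ[R] I := π.codRestrict I hπI with hπ'def
      have hπ'surj : Function.Surjective π' := by
        rintro ⟨x, hx⟩
        obtain ⟨c, hc⟩ := hπsurj x hx
        exact ⟨c, Subtype.ext hc⟩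
      have hkerπ' : LinearMap.ker π' = LinearMap.ker π := LinearMap.ker_codRestrict I π hπI
      have hle : LinearMap.ker π' ≤ LinearMap.ker q := by rw [hkerπ']; exact hNq
      set g : I →ₗ[R] E :=
        (Submodule.liftQ (LinearMap.ker π') q hle) ∘ₗ
          (LinearMap.quotKerEquivOfSurjective π' hπ'surj).symm.toLinearMap with hgdef
      have hg : ∀ i, g ⟨a i, haI i⟩ = e i := by
        intro i
        have h1 : π' (Pi.single i (1 : R)) = ⟨a i, haI i⟩ := by
          apply Subtype.ext
          show π (Pi.single i (1 : R)) = a i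
          rw [hπdef, combLin_apply]
          rw [Finset.sum_eq_single i (fun b _ hb => by rw [Pi.single_eq_of_ne hb, zero_smul])
            (fun h => absurd (Finset.mem_univ i) h), Pi.single_eq_same, one_smul]
        have h2 : (LinearMap.quotKerEquivOfSurjective π' hπ'surj).symm ⟨a i, haI i⟩ =
            Submodule.Quotient.mk (Pi.single i (1 : R)) := by
          rw [LinearEquiv.symm_apply_eq, ← h1]
          rfl
        show (Submodule.liftQ (LinearMap.ker π') q hle)
          ((LinearMap.quotKerEquivOfSurjective π' hπ'surj).symm ⟨a i, haI i⟩) = e i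
        rw [h2, Submodule.liftQ_apply, hqdef, combLin_apply]
        rw [Finset.sum_eq_single i (fun b _ hb => by rw [Pi.single_eq_of_ne hb, zero_smul])
          (fun h => absurd (Finset.mem_univ i) h), Pi.single_eq_same, one_smul]
      obtain ⟨gt, hgt⟩ := hE.out (Submodule.subtype I) (Submodule.injective_subtype I) g
      have he2 : ∀ i, e i = a i • gt 1 := by
        intro i
        rw [← hg i, ← hgt ⟨a i, haI i⟩]
        show gt ((a i : R)) = _
        calc gt ((a i : R)) = gt (a i • (1 : R)) := by rw [smul_eq_mul, mul_one]
          _ = a i • gt 1 := map_smul gt _ _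
      show ∑ i, v i (e i) = 0
      calc ∑ i, v i (e i) = ∑ i, (op (a i) • v i) (gt 1) := by
            refine Finset.sum_congr rfl fun i _ => ?_
            rw [he2 i]; rfl
        _ = (∑ i, op (a i) • v i) (gt 1) := (charSum_apply _ _).symm
        _ = 0 := by
            have : (∑ i, op (a i) • v i) = β v := rfl
            rw [this, hv]; rfl
    obtain ⟨Ξ, hΞ⟩ := char_factor ν χ' hfac
    set ξ : Fin l → CharMod E :=
      (fun j => (Ξ.comp (AddMonoidHom.single (fun _ => E) j) : CharMod E)) with hξdef
    have hvi : v = ∑ j, (fun i => op (nb j i) • ξ j) := by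
      funext i
      rw [Finset.sum_apply]
      apply CharMod.ext; intro x
      rw [charSum_apply]
      have e1 : χ' (Pi.single i x) = v i x := by
        show ∑ i', v i' ((Pi.single i x : Fin k → E) i') = v i x
        rw [Finset.sum_eq_single i (fun b _ hb => by rw [Pi.single_eq_of_ne hb, map_zero])
          (fun h => absurd (Finset.mem_univ i) h), Pi.single_eq_same]
      have e2 : ν (Pi.single i x) = fun j => nb j i • x := by
        funext j
        show ∑ i', nb j i' • Pi.single i x i' = nb j i • x
        rw [Finset.sum_eq_single i (fun b _ hb => by rw [Pi.single_eq_of_ne hb, smul_zero])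
          (fun h => absurd (Finset.mem_univ i) h), Pi.single_eq_same]
      have e3 : (fun j => nb j i • x) = ∑ j, Pi.single j (nb j i • x) :=
        (Finset.univ_sum_single _).symm
      calc v i x = χ' (Pi.single i x) := e1.symm
        _ = Ξ (ν (Pi.single i x)) := (hΞ _).symm
        _ = Ξ (∑ j, Pi.single j (nb j i • x)) := by rw [e2, ← e3]
        _ = ∑ j, Ξ (Pi.single j (nb j i • x)) := map_sum Ξ _ _
        _ = ∑ j, (op (nb j i) • ξ j) x := rfl
    rw [hvi]
    exact AddSubgroup.sum_mem _ (fun j _ => AddSubgroup.subset_closure ⟨j, ξ j, rfl⟩)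
  set Ψ : (Fin k → CharMod E) →+ QQ :=
    { toFun := fun w => ∑ i, ψv i (w i)
      map_zero' := by simp
      map_add' := fun w w' => by simp [Finset.sum_add_distrib] } with hΨdef
  have hΨW : ∀ w ∈ W, Ψ w = 0 := by
    intro w hw
    induction hw using AddSubgroup.closure_induction with
    | mem w hw =>
      obtain ⟨j, ξ, rfl⟩ := hw
      show ∑ i, ψv i (op (nb j i) • ξ) = 0
      have hterm : ∀ i, ψv i (op (nb j i) • ξ) = (nb j i • ψv i) ξ := fun i => rfl
      rw [Finset.sum_congr rfl (fun i _ => hterm i), ← charSum_apply, h5 j]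
      rfl
    | zero => simp
    | add x y _ _ hx hy => rw [map_add, hx, hy, add_zero]
    | neg x _ hx => rw [map_neg, hx, neg_zero]
  have hker : ∀ w, β w = 0 → Ψ w = 0 := fun w hw => hΨW w (key w hw)
  obtain ⟨ψ0, hψ⟩ := char_factor β Ψ hker
  set ψ : CharMod (CharMod E) := ψ0 with hψ'def
  have haψ : ∀ i, a i • ψ = ψv i := by
    intro i
    apply CharMod.ext; intro χ
    have e1 : β (Pi.single i χ) = op (a i) • χ := by
      show ∑ i', op (a i') • (Pi.single i χ : Fin k → CharMod E) i' = op (a i) • χ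
      rw [Finset.sum_eq_single i (fun b _ hb => by rw [Pi.single_eq_of_ne hb, smul_zero])
        (fun h => absurd (Finset.mem_univ i) h), Pi.single_eq_same]
    calc (a i • ψ) χ = ψ0 (op (a i) • χ) := rfl
      _ = ψ0 (β (Pi.single i χ)) := by rw [e1]
      _ = Ψ (Pi.single i χ) := hψ _
      _ = ψv i χ := by
        show ∑ i', ψv i' ((Pi.single i χ : Fin k → CharMod E) i') = ψv i χ
        rw [Finset.sum_eq_single i (fun b _ hb => by rw [Pi.single_eq_of_ne hb, map_zero])
          (fun h => absurd (Finset.mem_univ i) h), Pi.single_eq_same]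
  refine ⟨{ toFun := fun r => r • ψ
            map_add' := fun r s => add_smul r s _
            map_smul' := fun r s => mul_smul r s _ }, ?_⟩
  intro x hx
  obtain ⟨c, hc⟩ := hπsurj x hx
  show x • ψ = φ ⟨x, hx⟩
  have hxc : (⟨x, hx⟩ : I) = ∑ i, c i • (⟨a i, haI i⟩ : I) := by
    apply Subtype.ext
    show x = ((∑ i, c i • (⟨a i, haI i⟩ : I) : I) : R)
    rw [← hc, hπdef, combLin_apply]
    simp [smul_eq_mul]
  rw [hxc, map_sum φ]
  have hx2 : x = ∑ i, c i * a i := by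
    rw [← hc, hπdef, combLin_apply]
    exact Finset.sum_congr rfl fun i _ => by rw [smul_eq_mul]
  calc x • ψ = ∑ i, (c i * a i) • ψ := by
        rw [hx2, Finset.sum_smul]
    _ = ∑ i, c i • (a i • ψ) := by
        refine Finset.sum_congr rfl fun i _ => ?_
        rw [mul_smul]
    _ = ∑ i, c i • ψv i := by
        refine Finset.sum_congr rfl fun i _ => ?_
        rw [haψ i]
    _ = ∑ i, φ (c i • (⟨a i, haI i⟩ : I)) := by
        refine Finset.sum_congr rfl fun i _ => ?_
        rw [map_smul φ]
end Aux5

noncomputable section Aux6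

open MulOpposite

local notation "QQ" => AddCircle (1 : ℚ)

variable {R : Type u} [Ring R]

lemma flatRight_charMod [IsNoetherianRing R] {E : Type u} [AddCommGroup E] [Module R E]
    (hE : Module.Injective R E) : FlatRight R (CharMod E) := by
  intro A B _ _ _ _ f hf
  refine (injective_iff_map_eq_zero _).mpr ?_
  intro x hx
  by_contra hx0
  obtain ⟨χ, hχ⟩ := char_sep hx0
  obtain ⟨h, hh⟩ := (ddual_injective hE).out f hf (curryNC χ)
  set χ' : NCTensor R (CharMod E) B →+ QQ := uncurryNC h with hχ'def
  have hnat : ∀ y : NCTensor R (CharMod E) A, χ' (ncMapRight R (CharMod E) f y) = χ y := by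
    have hcomp : χ'.comp (ncMapRight R (CharMod E) f).toAddMonoidHom = χ := by
      apply nct_hom_ext
      intro m a
      show χ' (ncMapRight R (CharMod E) f (tmk m a)) = χ (tmk m a)
      rw [ncMapRight_tmk]
      show h (f a) m = χ (tmk m a)
      rw [hh a]
      rfl
    intro y
    exact DFunLike.congr_fun hcomp y
  have h0 := hnat x
  rw [hx, map_zero] at h0
  exact hχ h0.symm

lemma acyclic_dualCx_aux {C : Cx R} (hC : Acyclic R C) (n : ℤ) (x : CharMod (C.X (-n)))
    (hx : charDual (C.d (-(n-1)) (-n)).hom x = 0) :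
    ∃ y : CharMod (C.X (-(n+1))), charDual (C.d (-n) (-(n+1))).hom y = x := by
  have hx' : ∀ u : C.X (-(n-1)), x (C.d (-(n-1)) (-n) u) = 0 := fun u =>
    DFunLike.congr_fun hx u
  obtain ⟨ξ, hξ⟩ := char_exact (C.d (-(n-1)) (-n)).hom.toAddMonoidHom
    (C.d (-n) (-(n+1))).hom.toAddMonoidHom
    (fun b hb => acyclic_gen hC (a := -(n-1)) (b := -n) (c := -(n+1))
      (by omega) (by omega) b hb) x hx'
  exact ⟨ξ, CharMod.ext (fun m => hξ m)⟩

lemma acyclic_dualCx {C : Cx R} (hC : Acyclic R C) : Acyclic Rᵐᵒᵖ (dualCx C) := by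
  intro n x hx
  obtain ⟨y, hy⟩ := acyclic_dualCx_aux hC n x hx
  exact ⟨y, hy⟩

lemma acyclic_ddualCx_aux {C : Cx R} (hC : Acyclic R C) (n : ℤ)
    (ψ : CharMod (CharMod (C.X n)))
    (hψ : charDualOp (charDual (C.d n (n-1)).hom) ψ = 0) :
    ∃ Y : CharMod (CharMod (C.X (n+1))), charDualOp (charDual (C.d (n+1) n).hom) Y = ψ := by
  have hψ' : ∀ χ : CharMod (C.X (n-1)), ψ (charDual (C.d n (n-1)).hom χ) = 0 := fun χ =>
    DFunLike.congr_fun hψ χ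
  have hex : ∀ b : CharMod (C.X n), charDual (C.d (n+1) n).hom b = 0 →
      ∃ a : CharMod (C.X (n-1)), charDual (C.d n (n-1)).hom a = b := by
    intro b hb
    have hb' : ∀ t : C.X (n+1), b (C.d (n+1) n t) = 0 := fun t => DFunLike.congr_fun hb t
    obtain ⟨ξ, hξ⟩ := char_exact (C.d (n+1) n).hom.toAddMonoidHom (C.d n (n-1)).hom.toAddMonoidHom
      (fun y hy => hC n y hy) b hb'
    exact ⟨ξ, CharMod.ext (fun t => hξ t)⟩
  obtain ⟨Y, hY⟩ := char_exact
    (charDual (C.d n (n-1)).hom).toAddMonoidHom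
    (charDual (C.d (n+1) n).hom).toAddMonoidHom
    hex ψ hψ'
  exact ⟨Y, CharMod.ext (fun b => hY b)⟩

lemma acyclic_ddualCx {C : Cx R} (hC : Acyclic R C) : Acyclic R (ddualCx C) := by
  intro n x hx
  obtain ⟨y, hy⟩ := acyclic_ddualCx_aux hC n x hx
  exact ⟨y, hy⟩

end Aux6

noncomputable section Aux7

open MulOpposite

local notation "QQ" => AddCircle (1 : ℚ)

variable {R : Type u} [Ring R]

lemma fta_dualCx [IsNoetherianRing R] {C : Cx R}
    (htot : ∀ C : Cx R, Acyclic R C → (∀ n : ℤ, Module.Injective R (C.X n)) →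
      TotallyAcyclicInj R C)
    (hC : TotallyAcyclicInj R C) : FTotallyAcyclicRight R (dualCx C) := by
  obtain ⟨hAc, hInj, _⟩ := hC
  have hddInj : ∀ n : ℤ, Module.Injective R ((ddualCx C).X n) := fun n =>
    ddual_injective (hInj n)
  have hdd : TotallyAcyclicInj R (ddualCx C) := htot _ (acyclic_ddualCx hAc) hddInj
  refine ⟨acyclic_dualCx hAc, fun n => flatRight_charMod (hInj (-n)), ?_⟩
  intro I _ _ hI n x hx
  by_contra hcon
  push_neg at hcon
  set Bsub : AddSubgroup (NCTensor R ((dualCx C).X n) I) :=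
    AddMonoidHom.range (ncMapLeft R I
      (((dualCx C).d (n+1) n).hom : (dualCx C).X (n+1) →ₗ[Rᵐᵒᵖ] (dualCx C).X n)).toAddMonoidHom
    with hBdef
  have hxB : (QuotientAddGroup.mk x : _ ⧸ Bsub) ≠ 0 := by
    intro h0
    rw [QuotientAddGroup.eq_zero_iff] at h0
    obtain ⟨y, hy⟩ := h0
    exact hcon y hy
  obtain ⟨χq, hχq⟩ := char_sep hxB
  set χ : NCTensor R ((dualCx C).X n) I →+ QQ := χq.comp (QuotientAddGroup.mk' Bsub)
    with hχdef
  have hχx : χ x ≠ 0 := hχq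
  have hχB : ∀ y, χ (ncMapLeft R I
      (((dualCx C).d (n+1) n).hom : (dualCx C).X (n+1) →ₗ[Rᵐᵒᵖ] (dualCx C).X n) y) = 0 := by
    intro y
    have hmem : (QuotientAddGroup.mk (ncMapLeft R I
        (((dualCx C).d (n+1) n).hom : (dualCx C).X (n+1) →ₗ[Rᵐᵒᵖ] (dualCx C).X n) y) :
        _ ⧸ Bsub) = 0 :=
      (QuotientAddGroup.eq_zero_iff _).2 ⟨y, rfl⟩
    show χq (QuotientAddGroup.mk _) = 0
    rw [hmem, map_zero]
  set g : I →ₗ[R] CharMod ((dualCx C).X n) := curryNC χ with hgdef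
  have hg0 : ∀ i : I, (ddualCx C).d (-n) (-(n+1)) (g i) = 0 := by
    intro i
    apply CharMod.ext
    intro ξ
    show χ (tmk ((dualCx C).d (n+1) n ξ) i) = 0
    exact hχB (tmk ξ i)
  obtain ⟨h, hh⟩ := tot_gen (a := -(n-1)) (b := -n) (c := -(n+1)) hdd
    (by omega) (by omega) I hI g hg0
  set h2 : I →ₗ[R] CharMod (CharMod (C.X (-(n-1)))) := h with hh2def
  have hnat : ∀ y, (uncurryNC (M := CharMod (C.X (-(n-1)))) h2)
      (ncMapLeft R I (((dualCx C).d n (n-1)).hom :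
        (dualCx C).X n →ₗ[Rᵐᵒᵖ] (dualCx C).X (n-1)) y) = χ y := by
    have hcomp : (uncurryNC (M := CharMod (C.X (-(n-1)))) h2).comp
        (ncMapLeft R I (((dualCx C).d n (n-1)).hom :
          (dualCx C).X n →ₗ[Rᵐᵒᵖ] (dualCx C).X (n-1))).toAddMonoidHom = χ := by
      apply nct_hom_ext
      intro m i
      show (uncurryNC (M := CharMod (C.X (-(n-1)))) h2)
        (ncMapLeft R I _ (tmk m i)) = χ (tmk m i)
      show h2 i ((dualCx C).d n (n-1) m) = χ (tmk m i)
      have hh2 : charDualOp (charDual (C.d (-(n-1)) (-n)).hom) (h2 i) = curryNC χ i := hh i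
      exact DFunLike.congr_fun hh2 m
    intro y
    exact DFunLike.congr_fun hcomp y
  have h0 := hnat x
  rw [hx] at h0
  exact hχx (h0.symm.trans (map_zero (uncurryNC h2)))

end Aux7

noncomputable section Aux8

open MulOpposite

local notation "QQ" => AddCircle (1 : ℚ)

variable {R : Type u} [Ring R]

lemma cycles_equiv {C : Cx R} (hAc : Acyclic R C) {G : Type u} [AddCommGroup G] [Module R G]
    (n : ℤ) (e : G ≃ₗ[R] cycles R C n) :
    Nonempty (CharMod G ≃ₗ[Rᵐᵒᵖ] cycles Rᵐᵒᵖ (dualCx C) (-(n+1))) := by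
  set Z : Submodule R (C.X n) := cycles R C n with hZ
  have hdmem : ∀ u : C.X (-(-(n+1))), C.d (-(-(n+1))) n u ∈ Z := by
    intro u
    show C.d (-(-(n+1))) n u ∈ LinearMap.ker (C.d n (n-1)).hom
    rw [LinearMap.mem_ker]
    exact d_apply_d _ _ _ u
  set π' : C.X (-(-(n+1))) →ₗ[R] Z := LinearMap.codRestrict Z (C.d (-(-(n+1))) n).hom hdmem
    with hπ'
  have hsurj : Function.Surjective π' := by
    rintro ⟨z, hz⟩
    have hz' : C.d n (n-1) z = 0 := hz
    obtain ⟨w, hw⟩ := acyclic_gen hAc (a := -(-(n+1))) (b := n) (c := n - 1)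
      (by omega) (by omega) z hz'
    exact ⟨w, Subtype.ext hw⟩
  have hmem2 : ∀ ψ : CharMod Z,
      ((CharMod.toAdd ψ).comp π'.toAddMonoidHom : CharMod (C.X (-(-(n+1))))) ∈
        cycles Rᵐᵒᵖ (dualCx C) (-(n+1)) := by
    intro ψ
    show charDual (C.d (-((-(n+1)) - 1)) (-(-(n+1)))).hom
      ((CharMod.toAdd ψ).comp π'.toAddMonoidHom) = 0
    apply CharMod.ext
    intro u
    show ψ (π' (C.d (-((-(n+1)) - 1)) (-(-(n+1))) u)) = 0
    have hπ0 : π' (C.d (-((-(n+1)) - 1)) (-(-(n+1))) u) = 0 := by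
      apply Subtype.ext
      show C.d (-(-(n+1))) n (C.d (-((-(n+1)) - 1)) (-(-(n+1))) u) = 0
      exact d_apply_d _ _ _ u
    rw [hπ0, map_zero]
  set F : CharMod Z →ₗ[Rᵐᵒᵖ] cycles Rᵐᵒᵖ (dualCx C) (-(n+1)) :=
    { toFun := fun ψ =>
        ⟨((CharMod.toAdd ψ).comp π'.toAddMonoidHom : CharMod (C.X (-(-(n+1))))), hmem2 ψ⟩
      map_add' := fun ψ ξ => by
        apply Subtype.ext
        apply CharMod.ext
        intro u; rfl
      map_smul' := fun r ψ => by
        apply Subtype.ext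
        apply CharMod.ext
        intro u
        show ψ (r.unop • π' u) = ψ (π' (r.unop • u))
        rw [map_smul π'] } with hF
  have hFbij : Function.Bijective F := by
    constructor
    · intro ψ ξ h
      apply CharMod.ext
      intro z
      obtain ⟨u, rfl⟩ := hsurj z
      have h2 : (CharMod.toAdd ψ).comp π'.toAddMonoidHom =
          (CharMod.toAdd ξ).comp π'.toAddMonoidHom := congrArg Subtype.val h
      exact DFunLike.congr_fun h2 u
    · rintro ⟨χ, hχ⟩
      set χ0 : CharMod (C.X (-(-(n+1)))) := χ with hχ0def
      have hc : charDual (C.d (-((-(n+1)) - 1)) (-(-(n+1)))).hom χ0 = 0 := hχ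
      have hχ' : ∀ u, χ0 (C.d (-((-(n+1)) - 1)) (-(-(n+1))) u) = 0 := fun u =>
        DFunLike.congr_fun hc u
      have hker : ∀ v : C.X (-(-(n+1))), π' v = 0 → χ0 v = 0 := by
        intro v hv
        have hv' : C.d (-(-(n+1))) n v = 0 := congrArg Subtype.val hv
        obtain ⟨u, hu⟩ := acyclic_gen hAc (a := -((-(n+1)) - 1)) (b := -(-(n+1))) (c := n)
          (by omega) (by omega) v hv'
        rw [← hu]
        exact hχ' u
      obtain ⟨ψ, hψ⟩ := char_factor π'.toAddMonoidHom χ0 hker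
      refine ⟨ψ, ?_⟩
      apply Subtype.ext
      apply CharMod.ext
      intro u
      exact hψ u
  set E1 : CharMod G ≃ₗ[Rᵐᵒᵖ] CharMod Z :=
    LinearEquiv.ofLinear (charDual e.symm.toLinearMap) (charDual e.toLinearMap)
      (by
        apply LinearMap.ext; intro ψ
        apply CharMod.ext; intro z
        show ψ (e (e.symm z)) = ψ z
        rw [e.apply_symm_apply])
      (by
        apply LinearMap.ext; intro ψ
        apply CharMod.ext; intro g0
        show ψ (e.symm (e g0)) = ψ g0
        rw [e.symm_apply_apply]) with hE1
  exact ⟨E1.trans (LinearEquiv.ofBijective F hFbij)⟩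

end Aux8
theorem statement10 (R : Type u) [Ring R] [IsNoetherianRing R] [IsNoetherianRing Rᵐᵒᵖ]
    (htot : ∀ C : Cx R, Acyclic R C → (∀ n : ℤ, Module.Injective R (C.X n)) →
      TotallyAcyclicInj R C) :
    ∀ (G : Type u) [AddCommGroup G] [Module R G], IsGorensteinInj R G →
      IsGorensteinFlatRight R (CharMod G) := by
  intro G _ _ hG
  obtain ⟨C, hC, n, ⟨e⟩⟩ := hG
  exact ⟨dualCx C, fta_dualCx htot hC, -(n+1), cycles_equiv hC.1 n e⟩

end TotallyAcyclicPaper
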